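/- Let c be a standard Coxeter element of S_n. For 1 < i < j < n, the root (i,j) is c-charmed if and only if the chords connecting the circle positions of i,j and of i-1,j+1 cross, when the points 1,...,n are arranged on a circle in the cyclic order given by the cycle notation of c. -/

import Mathlib

/-- The adjacent transposition `sᵢ = (i, i+1)` in the symmetric group on `Fin (n+1)`. -/
def adjSwap (n : ℕ) (i : Fin n) : Equiv.Perm (Fin (n+1)) :=
  Equiv.swap i.castSucc i.succ

/-- `c` is a standard Coxeter element of `S_{n+1}`. -/
def IsStdCoxeter (n : ℕ) (c : Equiv.Perm (Fin (n+1))) : Prop :=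
  ∃ l : List (Fin n), l.Nodup ∧ (∀ i, i ∈ l) ∧ c = (l.map (adjSwap n)).prod

/-- For a standard Coxeter element, an interior element `x` lies in `L_c` iff `x < c x`
and in `R_c` iff `c x < x`; a root `(i,j)` with `1 < i < j < n` is `c`-charmed iff
one of `i, j` is in `L_c` and the other in `R_c`. -/
def charmedRel (n : ℕ) (c : Equiv.Perm (Fin (n+1))) (i j : Fin (n+1)) : Prop :=
  (i < c i ∧ c j < j) ∨ (c i < i ∧ j < c j)

/-- `t` lies strictly inside the cyclic arc from `p` to `q` (going in increasing
cyclic direction), where positions are taken modulo `N`. -/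
def inArc {N : ℕ} (p q t : Fin N) : Prop := t ≠ p ∧ t - p < q - p

/-- With the points placed on a circle at positions given by `a` (the cycle notation of `c`),
the chords `{x,y}` and `{u,v}` cross iff exactly one of `u, v` lies strictly inside one of
the two open arcs determined by `x` and `y`. -/
def chordsCross {N : ℕ} (a : Fin N ≃ Fin N) (x y u v : Fin N) : Prop :=
  Xor' (inArc (a.symm x) (a.symm y) (a.symm u)) (inArc (a.symm x) (a.symm y) (a.symm v))

namespace Stmt4Aux
variable {n : ℕ}

lemma adjSwap_cases (i : Fin n) (x : Fin (n+1)) :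
    (adjSwap n i x).val = x.val ∨ (x.val = i.val ∧ (adjSwap n i x).val = i.val + 1) ∨
      (x.val = i.val + 1 ∧ (adjSwap n i x).val = i.val) := by
  unfold adjSwap
  rcases eq_or_ne x i.castSucc with h|h
  · right; left; subst h; rw [Equiv.swap_apply_left]; simp
  rcases eq_or_ne x i.succ with h2|h2
  · right; right; subst h2; rw [Equiv.swap_apply_right]; simp
  · left; rw [Equiv.swap_apply_of_ne_of_ne h h2]

lemma adjSwap_up (i : Fin n) (x : Fin (n+1)) (h : x.val = i.val) :
    (adjSwap n i x).val = i.val + 1 := by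
  have : x = i.castSucc := Fin.ext (by simpa using h)
  subst this
  unfold adjSwap
  rw [Equiv.swap_apply_left]; simp

lemma adjSwap_down (i : Fin n) (x : Fin (n+1)) (h : x.val = i.val + 1) :
    (adjSwap n i x).val = i.val := by
  have : x = i.succ := Fin.ext (by simpa using h)
  subst this
  unfold adjSwap
  rw [Equiv.swap_apply_right]; simp

lemma prod_fix (l : List (Fin n)) (y : Fin (n+1))
    (h : ∀ i ∈ l, (i : ℕ) ≠ y.val ∧ (i : ℕ) + 1 ≠ y.val) :
    (l.map (adjSwap n)).prod y = y := by
  induction l with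
  | nil => simp
  | cons i l ih =>
    simp only [List.map_cons, List.prod_cons, Equiv.Perm.mul_apply]
    rw [ih (fun i hi => h i (List.mem_cons_of_mem _ hi))]
    obtain ⟨h1, h2⟩ := h i (List.mem_cons_self)
    unfold adjSwap
    apply Equiv.swap_apply_of_ne_of_ne
    · intro hx; apply h1; rw [hx]; simp
    · intro hx; apply h2; rw [hx]; simp

lemma stay_above (l : List (Fin n)) (y : ℕ) (h : ∀ i ∈ l, (i : ℕ) ≠ y)
    (x : Fin (n+1)) (hx : y < x.val) : y < ((l.map (adjSwap n)).prod x).val := by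
  induction l with
  | nil => simpa
  | cons i l ih =>
    simp only [List.map_cons, List.prod_cons, Equiv.Perm.mul_apply]
    have hv := ih (fun i hi => h i (List.mem_cons_of_mem _ hi))
    have hi := h i (List.mem_cons_self)
    rcases adjSwap_cases i ((l.map (adjSwap n)).prod x) with h1|⟨h1,h2⟩|⟨h1,h2⟩ <;> omega

lemma stay_below (l : List (Fin n)) (y : ℕ) (h : ∀ i ∈ l, (i : ℕ) + 1 ≠ y)
    (x : Fin (n+1)) (hx : x.val < y) : ((l.map (adjSwap n)).prod x).val < y := by
  induction l with
  | nil => simpa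
  | cons i l ih =>
    simp only [List.map_cons, List.prod_cons, Equiv.Perm.mul_apply]
    have hv := ih (fun i hi => h i (List.mem_cons_of_mem _ hi))
    have hi := h i (List.mem_cons_self)
    rcases adjSwap_cases i ((l.map (adjSwap n)).prod x) with h1|⟨h1,h2⟩|⟨h1,h2⟩ <;> omega

lemma go_up (l : List (Fin n)) (hl : l.Nodup) (y : Fin (n+1))
    (e : Fin n) (he : (e : ℕ) = y.val) (hel : e ∈ l)
    (hd : ∀ i ∈ l, (i : ℕ) + 1 ≠ y.val) :
    y.val < ((l.map (adjSwap n)).prod y).val := by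
  induction l with
  | nil => cases hel
  | cons i l ih =>
    simp only [List.map_cons, List.prod_cons, Equiv.Perm.mul_apply]
    rcases eq_or_ne i e with rfl|hne
    · have hfix : (l.map (adjSwap n)).prod y = y := by
        apply prod_fix
        intro i' hi'
        constructor
        · intro hv
          have : i' = i := Fin.ext (by omega)
          exact (List.nodup_cons.mp hl).1 (this ▸ hi')
        · exact hd i' (List.mem_cons_of_mem _ hi')
      rw [hfix]
      have := adjSwap_up i y he.symm
      omega
    · have hel' : e ∈ l := by
        rcases List.mem_cons.mp hel with h|h
        · exact absurd h.symm hne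
        · exact h
      have hv := ih (List.nodup_cons.mp hl).2 hel'
        (fun i hi => hd i (List.mem_cons_of_mem _ hi))
      have hine : (i : ℕ) ≠ y.val := by
        intro hv'; exact hne (Fin.ext (by omega))
      rcases adjSwap_cases i ((l.map (adjSwap n)).prod y) with h1|⟨h1,h2⟩|⟨h1,h2⟩ <;> omega

lemma go_down (l : List (Fin n)) (hl : l.Nodup) (y : Fin (n+1))
    (d : Fin n) (hd : (d : ℕ) + 1 = y.val) (hdl : d ∈ l)
    (he : ∀ i ∈ l, (i : ℕ) ≠ y.val) :
    ((l.map (adjSwap n)).prod y).val < y.val := by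
  induction l with
  | nil => cases hdl
  | cons i l ih =>
    simp only [List.map_cons, List.prod_cons, Equiv.Perm.mul_apply]
    rcases eq_or_ne i d with rfl|hne
    · have hfix : (l.map (adjSwap n)).prod y = y := by
        apply prod_fix
        intro i' hi'
        refine ⟨he i' (List.mem_cons_of_mem _ hi'), ?_⟩
        intro hv
        have : i' = i := Fin.ext (by omega)
        exact (List.nodup_cons.mp hl).1 (this ▸ hi')
      rw [hfix]
      have := adjSwap_down i y hd.symm
      omega
    · have hdl' : d ∈ l := by
        rcases List.mem_cons.mp hdl with h|h
        · exact absurd h.symm hne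
        · exact h
      have hv := ih (List.nodup_cons.mp hl).2 hdl'
        (fun i hi => he i (List.mem_cons_of_mem _ hi))
      have hine : (i : ℕ) + 1 ≠ y.val := by
        intro hv'; exact hne (Fin.ext (by omega))
      rcases adjSwap_cases i ((l.map (adjSwap n)).prod y) with h1|⟨h1,h2⟩|⟨h1,h2⟩ <;> omega


lemma mem_split_pair {α : Type*} {l : List α} {x y : α} (hx : x ∈ l) (hy : y ∈ l)
    (hxy : x ≠ y) :
    (∃ l₁ l₂, l = l₁ ++ x :: l₂ ∧ y ∈ l₂) ∨ (∃ l₁ l₂, l = l₁ ++ y :: l₂ ∧ x ∈ l₂) := by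
  induction l with
  | nil => cases hx
  | cons z l ih =>
    rcases List.mem_cons.mp hx with rfl|hx'
    · left
      have hy' : y ∈ l := by
        rcases List.mem_cons.mp hy with h|h
        · exact absurd h.symm hxy
        · exact h
      exact ⟨[], l, rfl, hy'⟩
    rcases List.mem_cons.mp hy with rfl|hy'
    · right; exact ⟨[], l, rfl, hx'⟩
    rcases ih hx' hy' with ⟨l₁,l₂,heq,hm⟩|⟨l₁,l₂,heq,hm⟩
    · left; exact ⟨z::l₁, l₂, by rw [heq]; rfl, hm⟩
    · right; exact ⟨z::l₁, l₂, by rw [heq]; rfl, hm⟩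


lemma split_up (y : Fin (n+1)) (d e : Fin n)
    (hd : (d : ℕ) + 1 = y.val) (he : (e : ℕ) = y.val)
    (l₁ l₂ : List (Fin n)) (hl : (l₁ ++ d :: l₂).Nodup) (hel : e ∈ l₂) :
    y.val < ((((l₁ ++ d :: l₂)).map (adjSwap n)).prod y).val := by
  have hdisj : l₁.Disjoint (d :: l₂) := List.disjoint_of_nodup_append hl
  have hl₂nd : (d :: l₂).Nodup := hl.of_append_right
  have hdl₂ : d ∉ l₂ := (List.nodup_cons.mp hl₂nd).1
  rw [List.map_append, List.prod_append, List.map_cons, List.prod_cons,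
    Equiv.Perm.mul_apply, Equiv.Perm.mul_apply]
  have hv₂ : y.val < ((l₂.map (adjSwap n)).prod y).val := by
    apply go_up l₂ (List.nodup_cons.mp hl₂nd).2 y e he hel
    intro i hi hiv
    exact hdl₂ (by have : i = d := Fin.ext (by omega); exact this ▸ hi)
  have hsw : y.val < ((adjSwap n d) ((l₂.map (adjSwap n)).prod y)).val := by
    rcases adjSwap_cases d ((l₂.map (adjSwap n)).prod y) with h1|⟨h1,h2⟩|⟨h1,h2⟩ <;> omega
  apply stay_above
  · intro i hi hiv
    have : i = e := Fin.ext (by omega)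
    subst this
    exact hdisj hi (List.mem_cons_of_mem _ hel)
  · exact hsw

lemma split_down (y : Fin (n+1)) (d e : Fin n)
    (hd : (d : ℕ) + 1 = y.val) (he : (e : ℕ) = y.val)
    (l₁ l₂ : List (Fin n)) (hl : (l₁ ++ e :: l₂).Nodup) (hdl : d ∈ l₂) :
    ((((l₁ ++ e :: l₂)).map (adjSwap n)).prod y).val < y.val := by
  have hdisj : l₁.Disjoint (e :: l₂) := List.disjoint_of_nodup_append hl
  have hl₂nd : (e :: l₂).Nodup := hl.of_append_right
  have hel₂ : e ∉ l₂ := (List.nodup_cons.mp hl₂nd).1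
  rw [List.map_append, List.prod_append, List.map_cons, List.prod_cons,
    Equiv.Perm.mul_apply, Equiv.Perm.mul_apply]
  have hv₂ : ((l₂.map (adjSwap n)).prod y).val < y.val := by
    apply go_down l₂ (List.nodup_cons.mp hl₂nd).2 y d hd hdl
    intro i hi hiv
    exact hel₂ (by have : i = e := Fin.ext (by omega); exact this ▸ hi)
  have hsw : ((adjSwap n e) ((l₂.map (adjSwap n)).prod y)).val < y.val := by
    rcases adjSwap_cases e ((l₂.map (adjSwap n)).prod y) with h1|⟨h1,h2⟩|⟨h1,h2⟩ <;> omega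
  apply stay_below
  · intro i hi hiv
    have : i = d := Fin.ext (by omega)
    subst this
    exact hdisj hi (List.mem_cons_of_mem _ hdl)
  · exact hsw

lemma cox_key (c : Equiv.Perm (Fin (n+1))) (hc : IsStdCoxeter n c)
    (y : Fin (n+1)) (hy0 : 0 < y) (hyn : y < Fin.last n) :
    (c⁻¹ y < y ↔ y < c y) := by
  obtain ⟨l, hnd, hall, rfl⟩ := hc
  have hyval : 0 < y.val := hy0
  have hyn' : y.val < n := hyn
  set d : Fin n := ⟨y.val - 1, by omega⟩ with hdd
  set e : Fin n := ⟨y.val, hyn'⟩ with hee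
  have hd : (d : ℕ) + 1 = y.val := by
    have : (d : ℕ) = y.val - 1 := rfl
    omega
  have he : (e : ℕ) = y.val := rfl
  have hde : d ≠ e := by
    intro h; rw [Fin.ext_iff] at h; simp [hdd, hee] at h; omega
  have hinv : ((l.map (adjSwap n)).prod)⁻¹ = ((l.reverse.map (adjSwap n)).prod) := by
    rw [List.map_reverse, List.prod_reverse_noncomm, List.map_map]
    have hcomp : ((fun x => x⁻¹) ∘ adjSwap n) = adjSwap n := by
      funext i
      simp only [Function.comp_apply, adjSwap, Equiv.swap_inv]
    rw [hcomp]
  have hrevnd : l.reverse.Nodup := List.nodup_reverse.mpr hnd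
  rcases mem_split_pair (hall d) (hall e) hde with ⟨l₁,l₂,heq,hm⟩|⟨l₁,l₂,heq,hm⟩
  · -- d applied after e : y goes up, y comes from above
    have h1 : y.val < ((l.map (adjSwap n)).prod y).val := by
      rw [heq]; exact split_up y d e hd he l₁ l₂ (heq ▸ hnd) hm
    -- reverse: l.reverse = l₂.reverse ++ d :: l₁.reverse with e ∈ l₂.reverse
    have hmr : e ∈ l₂.reverse := List.mem_reverse.mpr hm
    obtain ⟨s, t, hst⟩ := List.append_of_mem hmr
    have hrev : l.reverse = s ++ e :: (t ++ d :: l₁.reverse) := by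
      rw [heq]
      simp [List.reverse_append, hst]
    have h2 : (((l.map (adjSwap n)).prod)⁻¹ y).val < y.val := by
      rw [hinv, hrev]
      exact split_down y d e hd he s (t ++ d :: l₁.reverse) (hrev ▸ hrevnd)
        (List.mem_append.mpr (Or.inr (List.mem_cons_self)))
    constructor
    · intro _; rw [Fin.lt_def]; exact h1
    · intro _; rw [Fin.lt_def]; exact h2
  · -- e applied after d : y goes down
    have h1 : ((l.map (adjSwap n)).prod y).val < y.val := by
      rw [heq]; exact split_down y d e hd he l₁ l₂ (heq ▸ hnd) hm
    have hmr : d ∈ l₂.reverse := List.mem_reverse.mpr hm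
    obtain ⟨s, t, hst⟩ := List.append_of_mem hmr
    have hrev : l.reverse = s ++ d :: (t ++ e :: l₁.reverse) := by
      rw [heq]
      simp [List.reverse_append, hst]
    have h2 : y.val < (((l.map (adjSwap n)).prod)⁻¹ y).val := by
      rw [hinv, hrev]
      exact split_up y d e hd he s (t ++ e :: l₁.reverse) (hrev ▸ hrevnd)
        (List.mem_append.mpr (Or.inr (List.mem_cons_self)))
    constructor
    · intro h
      rw [Fin.lt_def] at h ⊢
      omega
    · intro h
      rw [Fin.lt_def] at h ⊢
      omega


section Geometry
variable {c : Equiv.Perm (Fin (n+1))} {a : Fin (n+1) ≃ Fin (n+1)}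

lemma step_eq (hacyc : ∀ i, c (a i) = a (i + 1)) {K : ℕ} (h1 : K < n + 1)
    (h2 : K + 1 < n + 1) :
    c (a ⟨K, h1⟩) = a ⟨K + 1, h2⟩ := by
  rw [hacyc]
  congr 1
  rw [Fin.ext_iff, Fin.val_add_one]
  split
  · next heq =>
    rw [Fin.ext_iff] at heq
    simp only [Fin.val_last] at heq
    omega
  · rfl

lemma inv_step (hacyc : ∀ i, c (a i) = a (i + 1)) {K : ℕ} (h1 : K < n + 1)
    (h2 : K + 1 < n + 1) :
    c⁻¹ (a ⟨K + 1, h2⟩) = a ⟨K, h1⟩ := by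
  rw [← step_eq hacyc h1 h2]
  exact c.symm_apply_apply _

lemma ascend (hc : IsStdCoxeter n c) (ha0 : a 0 = 0)
    (hacyc : ∀ i, c (a i) = a (i + 1)) :
    ∀ K : ℕ, ∀ (hK1 : K < n + 1) (hK2 : K + 1 < n + 1),
      K < (a.symm (Fin.last n)).val →
      (a ⟨K, hK1⟩).val < (a ⟨K + 1, hK2⟩).val := by
  intro K
  induction K with
  | zero =>
    intro hK1 hK2 _
    have h0 : a ⟨0, hK1⟩ = 0 := ha0
    have hne : a ⟨0+1, hK2⟩ ≠ 0 := by
      rw [← h0]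
      intro h
      have := a.injective h
      simp [Fin.ext_iff] at this
    have h0v : (a ⟨0, hK1⟩).val = 0 := by rw [h0]; rfl
    have hnev : (a ⟨0+1, hK2⟩).val ≠ 0 := by
      intro h; apply hne; ext; rw [h, Fin.val_zero]
    omega
  | succ K ih =>
    intro hK1 hK2 hKm
    have hK0 : K < n + 1 := by omega
    have ihv := ih hK0 hK1 (by omega)
    set y := a ⟨K + 1, hK1⟩ with hy
    have hcy : c y = a ⟨K + 1 + 1, hK2⟩ := step_eq hacyc hK1 hK2
    have hinv : c⁻¹ y = a ⟨K, hK0⟩ := inv_step hacyc hK0 hK1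
    have hy0 : 0 < y := by
      rw [Fin.pos_iff_ne_zero, hy, ← ha0]
      intro h
      have := a.injective h
      simp [Fin.ext_iff] at this
    have hyn : y < Fin.last n := by
      have hne : y ≠ Fin.last n := by
        rw [hy]
        intro h
        have h2 : a ⟨K + 1, hK1⟩ = a (a.symm (Fin.last n)) := by
          rw [a.apply_symm_apply]; exact h
        have := a.injective h2
        simp [Fin.ext_iff] at this
        omega
      exact lt_of_le_of_ne (Fin.le_last y) hne
    have hkey := (cox_key c hc y hy0 hyn).mp (by rw [hinv, Fin.lt_def]; exact ihv)
    rw [hcy, Fin.lt_def] at hkey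
    exact hkey

lemma descend (hc : IsStdCoxeter n c) (ha0 : a 0 = 0)
    (hacyc : ∀ i, c (a i) = a (i + 1)) (hn : 1 ≤ n) :
    ∀ K : ℕ, ∀ (hK1 : K < n + 1) (hK2 : K + 1 < n + 1),
      (a.symm (Fin.last n)).val ≤ K →
      (a ⟨K + 1, hK2⟩).val < (a ⟨K, hK1⟩).val := by
  have hmlast : a (a.symm (Fin.last n)) = Fin.last n := a.apply_symm_apply _
  have hlast_ne : ∀ (J : ℕ) (hJ : J < n + 1), J ≠ (a.symm (Fin.last n)).val →
      (a ⟨J, hJ⟩).val < n := by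
    intro J hJ hne
    have hne2 : a ⟨J, hJ⟩ ≠ Fin.last n := by
      rw [← hmlast]
      intro h
      have := a.injective h
      simp [Fin.ext_iff] at this
      exact hne this
    have hlt := lt_of_le_of_ne (Fin.le_last _) hne2
    simpa [Fin.lt_def] using hlt
  intro K
  induction K with
  | zero =>
    intro hK1 hK2 hm0
    exfalso
    have hz : a.symm (Fin.last n) = 0 := by
      rw [Fin.ext_iff]
      simp only [Fin.val_zero]
      omega
    have hbad : Fin.last n = 0 := by rw [← hmlast, hz, ha0]
    have := congrArg Fin.val hbad
    simp only [Fin.val_zero, Fin.val_last] at this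
    omega
  | succ K ih =>
    intro hK1 hK2 hm
    have hK0 : K < n + 1 := by omega
    rcases eq_or_lt_of_le hm with heq|hlt
    · have hKm : (⟨K + 1, hK1⟩ : Fin (n+1)) = a.symm (Fin.last n) :=
        Fin.ext (show K + 1 = _ by omega)
      have hv : (a ⟨K + 1, hK1⟩).val = n := by
        rw [hKm, hmlast]; rfl
      have h2 := hlast_ne (K + 1 + 1) hK2 (by omega)
      omega
    · have ihv := ih hK0 hK1 (by omega)
      set y := a ⟨K + 1, hK1⟩ with hy
      have hcy : c y = a ⟨K + 1 + 1, hK2⟩ := step_eq hacyc hK1 hK2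
      have hinv : c⁻¹ y = a ⟨K, hK0⟩ := inv_step hacyc hK0 hK1
      have hy0 : 0 < y := by
        rw [Fin.pos_iff_ne_zero, hy, ← ha0]
        intro h
        have := a.injective h
        simp [Fin.ext_iff] at this
      have hyn : y < Fin.last n := by
        rw [Fin.lt_def, Fin.val_last]
        exact hlast_ne (K + 1) hK1 (by omega)
      have hne2 : (c y).val ≠ y.val := by
        rw [hcy, hy]
        intro h
        have := a.injective (Fin.ext h)
        simp [Fin.ext_iff] at this
      have hnlt : ¬ (c⁻¹ y < y) := by
        rw [hinv, Fin.lt_def]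
        omega
      have hngt : ¬ (y < c y) := fun h => hnlt ((cox_key c hc y hy0 hyn).mpr h)
      rw [Fin.lt_def] at hngt
      rw [hcy] at hne2 hngt
      omega


lemma asc_mono (hc : IsStdCoxeter n c) (ha0 : a 0 = 0)
    (hacyc : ∀ i, c (a i) = a (i + 1)) :
    ∀ (K' K : ℕ) (hK : K < n + 1) (hK' : K' < n + 1),
      K < K' → K' ≤ (a.symm (Fin.last n)).val →
      (a ⟨K, hK⟩).val < (a ⟨K', hK'⟩).val := by
  intro K'
  induction K' with
  | zero => omega
  | succ K' ih =>
    intro K hK hK' hlt hle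
    rcases eq_or_lt_of_le (Nat.lt_succ_iff.mp hlt) with heq|hlt'
    · subst heq
      exact ascend hc ha0 hacyc K hK hK' (by omega)
    · have h1 := ih K hK (by omega) hlt' (by omega)
      have h2 := ascend hc ha0 hacyc K' (by omega) hK' (by omega)
      omega

lemma desc_mono (hc : IsStdCoxeter n c) (ha0 : a 0 = 0)
    (hacyc : ∀ i, c (a i) = a (i + 1)) (hn : 1 ≤ n) :
    ∀ (K' K : ℕ) (hK : K < n + 1) (hK' : K' < n + 1),
      (a.symm (Fin.last n)).val ≤ K → K < K' →
      (a ⟨K', hK'⟩).val < (a ⟨K, hK⟩).val := by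
  intro K'
  induction K' with
  | zero => omega
  | succ K' ih =>
    intro K hK hK' hm hlt
    rcases eq_or_lt_of_le (Nat.lt_succ_iff.mp hlt) with heq|hlt'
    · subst heq
      exact descend hc ha0 hacyc hn K hK hK' hm
    · have h1 := ih K hK (by omega) hm hlt'
      have h2 := descend hc ha0 hacyc hn K' (by omega) hK' (by omega)
      omega

/-- On the ascending part, values increase with position: value order ⇒ position order. -/
lemma T1 (hc : IsStdCoxeter n c) (ha0 : a 0 = 0)
    (hacyc : ∀ i, c (a i) = a (i + 1))
    (x y : Fin (n+1)) (hx : (a.symm x).val ≤ (a.symm (Fin.last n)).val)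
    (hy : (a.symm y).val ≤ (a.symm (Fin.last n)).val) (hxy : x.val < y.val) :
    (a.symm x).val < (a.symm y).val := by
  rcases lt_trichotomy (a.symm x).val (a.symm y).val with h|h|h
  · exact h
  · exfalso
    have : a.symm x = a.symm y := Fin.ext h
    have := a.symm.injective this
    omega
  · exfalso
    have := asc_mono hc ha0 hacyc (a.symm x).val (a.symm y).val (a.symm y).isLt
      (a.symm x).isLt h hx
    rw [Fin.eta, Fin.eta, a.apply_symm_apply, a.apply_symm_apply] at this
    omega

/-- On the descending part, values decrease with position: value order ⇒ reverse position
order. -/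
lemma T2 (hc : IsStdCoxeter n c) (ha0 : a 0 = 0)
    (hacyc : ∀ i, c (a i) = a (i + 1)) (hn : 1 ≤ n)
    (x y : Fin (n+1)) (hx : (a.symm (Fin.last n)).val ≤ (a.symm x).val)
    (hy : (a.symm (Fin.last n)).val ≤ (a.symm y).val) (hxy : x.val < y.val) :
    (a.symm y).val < (a.symm x).val := by
  rcases lt_trichotomy (a.symm y).val (a.symm x).val with h|h|h
  · exact h
  · exfalso
    have : a.symm x = a.symm y := Fin.ext h.symm
    have := a.symm.injective this
    omega
  · exfalso
    have := desc_mono hc ha0 hacyc hn (a.symm y).val (a.symm x).val (a.symm x).isLt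
      (a.symm y).isLt hx h
    rw [Fin.eta, Fin.eta, a.apply_symm_apply, a.apply_symm_apply] at this
    omega

/-- Position characterization of ascent. -/
lemma posLt (hc : IsStdCoxeter n c) (ha0 : a 0 = 0)
    (hacyc : ∀ i, c (a i) = a (i + 1)) (hn : 1 ≤ n)
    (x : Fin (n+1)) (hx0 : 0 < x.val) (hxn : x.val < n) :
    (x.val < (c x).val ↔ (a.symm x).val < (a.symm (Fin.last n)).val) := by
  set m := a.symm (Fin.last n) with hm
  set k := a.symm x with hk
  have hxk : a ⟨k.val, k.isLt⟩ = x := by rw [Fin.eta, hk, a.apply_symm_apply]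
  have hkm : k.val ≠ m.val := by
    intro h
    have : k = m := Fin.ext h
    rw [hk, hm] at this
    have := a.symm.injective this
    rw [this] at hxn
    simp [Fin.val_last] at hxn
  rcases lt_trichotomy k.val m.val with h|h|h
  · have hstep := step_eq hacyc k.isLt (show k.val + 1 < n + 1 by omega)
    rw [hxk] at hstep
    have := ascend hc ha0 hacyc k.val k.isLt (by omega) h
    rw [hxk] at this
    rw [hstep]
    exact ⟨fun _ => h, fun _ => this⟩
  · exact absurd h hkm
  · -- descending side : x < c x is false
    have hlhs : ¬ (x.val < (c x).val) := by
      rcases eq_or_lt_of_le (Nat.lt_succ_iff.mp k.isLt) with heq|hlt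
    -- k = last position
      · have hklast : k = Fin.last n := Fin.ext heq
        have : c x = a (Fin.last n + 1) := by
          rw [← hxk, hacyc, hklast]
        rw [Fin.last_add_one, ha0] at this
        rw [this]
        simp
      · have hstep := step_eq hacyc k.isLt (show k.val + 1 < n + 1 by omega)
        rw [hxk] at hstep
        have := descend hc ha0 hacyc hn k.val k.isLt (by omega) (by omega)
        rw [hstep]
        omega
    constructor
    · intro hx'; exact absurd hx' hlhs
    · intro hx'; omega

end Geometry

lemma sub_val (x y : Fin (n+1)) :
    ((x - y : Fin (n+1))).val =
      if y.val ≤ x.val then x.val - y.val else x.val + (n+1) - y.val := by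
  rw [Fin.sub_def]
  simp only
  split
  · next h =>
    have heq : (n + 1) - y.val + x.val = (x.val - y.val) + (n + 1) := by omega
    rw [heq, Nat.add_mod_right, Nat.mod_eq_of_lt (by omega)]
  · next h =>
    rw [Nat.mod_eq_of_lt (by omega)]
    omega

lemma inArc_iff_lt {p q t : Fin (n+1)} (hpq : p.val < q.val) :
    inArc p q t ↔ (p.val < t.val ∧ t.val < q.val) := by
  simp only [inArc, Fin.lt_def, sub_val, ne_eq, Fin.ext_iff]
  split_ifs <;> omega

lemma inArc_iff_gt {p q t : Fin (n+1)} (hqp : q.val < p.val) :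
    inArc p q t ↔ (t.val < q.val ∨ p.val < t.val) := by
  simp only [inArc, Fin.lt_def, sub_val, ne_eq, Fin.ext_iff]
  split_ifs <;> omega

end Stmt4Aux

open Stmt4Aux

/-- A root `(i,j)` with `1 < i < j < n` is `c`-charmed iff the chord `(i,j)` crosses the
chord `(i-1, j+1)` when the points are arranged on a circle in the cyclic order given by
the cycle notation of `c`. -/
theorem stmt4 (n : ℕ) (c : Equiv.Perm (Fin (n+1))) (hc : IsStdCoxeter n c)
    (a : Fin (n+1) ≃ Fin (n+1)) (ha0 : a 0 = 0) (hacyc : ∀ i, c (a i) = a (i + 1)) :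
    ∀ i j : Fin (n+1), 0 < i → i < j → j < Fin.last n →
      (charmedRel n c i j ↔ chordsCross a i j (i - 1) (j + 1)) := by
  intro i j hi hij hj
  have hi' : 0 < i.val := hi
  have hij' : i.val < j.val := hij
  have hj' : j.val < n := by
    have := (Fin.lt_def.mp hj)
    simpa using this
  have hn : 1 ≤ n := by omega
  -- values of the moved chord endpoints
  have him : (i - 1).val = i.val - 1 := by
    rw [sub_val]
    have h1 : (1 : Fin (n+1)).val = 1 := by
      rw [Fin.val_one']
      exact Nat.mod_eq_of_lt (by omega)
    rw [h1]
    split <;> omega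
  have hjp : (j + 1).val = j.val + 1 := by
    rw [Fin.val_add_one]
    split
    · next h =>
      exfalso
      rw [h] at hj
      exact lt_irrefl _ hj
    · rfl
  -- c is fixed-point free
  have hcne : ∀ x : Fin (n+1), (c x).val ≠ x.val := by
    intro x h
    have hx1 : c (a (a.symm x)) = a (a.symm x + 1) := hacyc _
    rw [a.apply_symm_apply] at hx1
    have h1 : a (a.symm x + 1) = a (a.symm x) := by
      rw [← hx1, a.apply_symm_apply]
      exact Fin.ext h
    have h2 := a.injective h1
    have h3 := congrArg Fin.val h2
    rw [Fin.val_add_one] at h3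
    split at h3
    · next hlast =>
      rw [hlast] at h3
      simp [Fin.val_last] at h3
      omega
    · omega
  -- translate charmedRel into position data
  have hchi := posLt hc ha0 hacyc hn i hi' (by omega)
  have hchj := posLt hc ha0 hacyc hn j (by omega) hj'
  have hnei := hcne i
  have hnej := hcne j
  have hch : charmedRel n c i j ↔
      ((a.symm i).val < (a.symm (Fin.last n)).val ∧
        ¬ (a.symm j).val < (a.symm (Fin.last n)).val) ∨
      (¬ (a.symm i).val < (a.symm (Fin.last n)).val ∧
        (a.symm j).val < (a.symm (Fin.last n)).val) := by
    simp only [charmedRel, Fin.lt_def]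
    constructor
    · rintro (⟨h1, h2⟩|⟨h1, h2⟩)
      · exact Or.inl ⟨hchi.mp h1, fun h => by have := hchj.mpr h; omega⟩
      · exact Or.inr ⟨fun h => by have := hchi.mpr h; omega, hchj.mp h2⟩
    · rintro (⟨h1, h2⟩|⟨h1, h2⟩)
      · refine Or.inl ⟨hchi.mpr h1, ?_⟩
        have : ¬ (j.val < (c j).val) := fun h => h2 (hchj.mp h)
        omega
      · refine Or.inr ⟨?_, hchj.mpr h2⟩
        have : ¬ (i.val < (c i).val) := fun h => h1 (hchi.mp h)
        omega
  rw [hch]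
  -- positions of i, j differ from the position m of the maximum
  have hpm : (a.symm i).val ≠ (a.symm (Fin.last n)).val := by
    intro h
    have h2 : i = Fin.last n := a.symm.injective (Fin.ext h)
    have := congrArg Fin.val h2
    simp only [Fin.val_last] at this
    omega
  have hqm : (a.symm j).val ≠ (a.symm (Fin.last n)).val := by
    intro h
    have h2 : j = Fin.last n := a.symm.injective (Fin.ext h)
    have := congrArg Fin.val h2
    simp only [Fin.val_last] at this
    omega
  rcases lt_or_gt_of_ne hpm with hpm'|hpm' <;> rcases lt_or_gt_of_ne hqm with hqm'|hqm'
  · -- both ascending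
    have hpq : (a.symm i).val < (a.symm j).val :=
      T1 hc ha0 hacyc i j (le_of_lt hpm') (le_of_lt hqm') hij'
    have hU : ¬ ((a.symm i).val < (a.symm (i-1)).val ∧
        (a.symm (i-1)).val < (a.symm j).val) := by
      rcases le_or_gt (a.symm (i-1)).val (a.symm (Fin.last n)).val with h|h
      · have := T1 hc ha0 hacyc (i-1) i h (le_of_lt hpm') (by omega)
        omega
      · omega
    have hV : ¬ ((a.symm i).val < (a.symm (j+1)).val ∧
        (a.symm (j+1)).val < (a.symm j).val) := by
      rcases le_or_gt (a.symm (j+1)).val (a.symm (Fin.last n)).val with h|h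
      · have := T1 hc ha0 hacyc j (j+1) (le_of_lt hqm') h (by omega)
        omega
      · omega
    simp only [chordsCross, Xor', Xor, inArc_iff_lt hpq]
    omega
  · -- i ascending, j descending
    have hpq : (a.symm i).val < (a.symm j).val := by omega
    have hU : ¬ ((a.symm i).val < (a.symm (i-1)).val ∧
        (a.symm (i-1)).val < (a.symm j).val) := by
      rcases le_or_gt (a.symm (i-1)).val (a.symm (Fin.last n)).val with h|h
      · have := T1 hc ha0 hacyc (i-1) i h (le_of_lt hpm') (by omega)
        omega
      · have := T2 hc ha0 hacyc hn (i-1) j (le_of_lt h) (le_of_lt hqm') (by omega)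
        omega
    have hV : ((a.symm i).val < (a.symm (j+1)).val ∧
        (a.symm (j+1)).val < (a.symm j).val) := by
      rcases le_or_gt (a.symm (j+1)).val (a.symm (Fin.last n)).val with h|h
      · have := T1 hc ha0 hacyc i (j+1) (le_of_lt hpm') h (by omega)
        omega
      · have := T2 hc ha0 hacyc hn j (j+1) (le_of_lt hqm') (le_of_lt h) (by omega)
        omega
    simp only [chordsCross, Xor', Xor, inArc_iff_lt hpq]
    omega
  · -- i descending, j ascending
    have hqp : (a.symm j).val < (a.symm i).val := by omega
    have hU : ((a.symm (i-1)).val < (a.symm j).val ∨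
        (a.symm i).val < (a.symm (i-1)).val) := by
      rcases le_or_gt (a.symm (i-1)).val (a.symm (Fin.last n)).val with h|h
      · have := T1 hc ha0 hacyc (i-1) j h (le_of_lt hqm') (by omega)
        omega
      · have := T2 hc ha0 hacyc hn (i-1) i (le_of_lt h) (le_of_lt hpm') (by omega)
        omega
    have hV : ¬ ((a.symm (j+1)).val < (a.symm j).val ∨
        (a.symm i).val < (a.symm (j+1)).val) := by
      rcases le_or_gt (a.symm (j+1)).val (a.symm (Fin.last n)).val with h|h
      · have := T1 hc ha0 hacyc j (j+1) (le_of_lt hqm') h (by omega)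
        omega
      · have := T2 hc ha0 hacyc hn i (j+1) (le_of_lt hpm') (le_of_lt h) (by omega)
        omega
    simp only [chordsCross, Xor', Xor, inArc_iff_gt hqp]
    omega
  · -- both descending
    have hqp : (a.symm j).val < (a.symm i).val :=
      T2 hc ha0 hacyc hn i j (le_of_lt hpm') (le_of_lt hqm') hij'
    have hU : ((a.symm (i-1)).val < (a.symm j).val ∨
        (a.symm i).val < (a.symm (i-1)).val) := by
      rcases le_or_gt (a.symm (i-1)).val (a.symm (Fin.last n)).val with h|h
      · omega
      · have := T2 hc ha0 hacyc hn (i-1) i (le_of_lt h) (le_of_lt hpm') (by omega)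
        omega
    have hV : ((a.symm (j+1)).val < (a.symm j).val ∨
        (a.symm i).val < (a.symm (j+1)).val) := by
      rcases le_or_gt (a.symm (j+1)).val (a.symm (Fin.last n)).val with h|h
      · omega
      · have := T2 hc ha0 hacyc hn j (j+1) (le_of_lt hqm') (le_of_lt h) (by omega)
        omega
    simp only [chordsCross, Xor', Xor, inArc_iff_gt hqp]
    omega
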